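/- Let A : E → F be a continuous linear map. Then the resolvent set ρ(A, j) := { λ ∈ ℂ : A − λj is bijective } is an open subset of ℂ. -/

import Mathlib

/-- The resolvent set `ρ(A, j) = {λ ∈ ℂ : A − λj is bijective}` is an open subset of `ℂ`. -/
theorem isOpen_resolventSet_pip
    {E F : Type*} [NormedAddCommGroup E] [InnerProductSpace ℂ E] [CompleteSpace E]
    [NormedAddCommGroup F] [InnerProductSpace ℂ F] [CompleteSpace F]
    (j : E →L[ℂ] F) (hj_inj : Function.Injective j) (hj_dense : DenseRange j)
    (A : E →L[ℂ] F) :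
    IsOpen {lam : ℂ | Function.Bijective ⇑(A - lam • j)} := by
  rcases Set.eq_empty_or_nonempty {lam : ℂ | Function.Bijective ⇑(A - lam • j)} with h | ⟨μ, hμ⟩
  · rw [h]; exact isOpen_empty
  · -- build an equivalence from the bijective map at μ
    have hker : LinearMap.ker (A - μ • j) = ⊥ := LinearMap.ker_eq_bot.2 (by exact hμ.1)
    have hrange : LinearMap.range (A - μ • j) = ⊤ := LinearMap.range_eq_top.2 (by exact hμ.2)
    set e := ContinuousLinearEquiv.ofBijective (A - μ • j) hker hrange with he
    have hset : {lam : ℂ | Function.Bijective ⇑(A - lam • j)}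
        = (fun lam : ℂ => (e.symm : F →L[ℂ] E).comp (A - lam • j)) ⁻¹'
          {x : E →L[ℂ] E | IsUnit x} := by
      ext lam
      simp only [Set.mem_setOf_eq, Set.mem_preimage, ContinuousLinearMap.isUnit_iff_bijective,
        ContinuousLinearMap.coe_comp]
      constructor
      · intro hb; exact e.symm.bijective.comp hb
      · intro hb
        have : ⇑(A - lam • j) = ⇑(e : E →L[ℂ] F) ∘ (⇑(e.symm : F →L[ℂ] E) ∘ ⇑(A - lam • j)) := by
          ext x
          simp [ContinuousLinearEquiv.apply_symm_apply]
        rw [this]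
        exact e.bijective.comp hb
    rw [hset]
    have hcont : Continuous (fun lam : ℂ => (e.symm : F →L[ℂ] E).comp (A - lam • j)) := by
      have : (fun lam : ℂ => (e.symm : F →L[ℂ] E).comp (A - lam • j))
          = fun lam : ℂ => (e.symm : F →L[ℂ] E).comp A - lam • (e.symm : F →L[ℂ] E).comp j := by
        ext lam x
        simp
      rw [this]
      exact continuous_const.sub (continuous_id.smul continuous_const)
    exact Units.isOpen.preimage hcont
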